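/- For all real numbers d_r ≥ 2 and c ≥ 1: (d_r+2)·e^{−1/c} − d_r·e^{−(d_r+2)/(c·d_r − 1)} < 2. -/

import Mathlib

private lemma exp_taylor5 {t : ℝ} (ht : 0 ≤ t) :
    1 + t + t ^ 2 / 2 + t ^ 3 / 6 + t ^ 4 / 24 ≤ Real.exp t := by
  have h := Real.sum_le_exp_of_nonneg ht 5
  simp [Finset.sum_range_succ, Nat.factorial] at h
  linarith

private lemma exp_neg_quad_upper {u : ℝ} (hu : 0 ≤ u) :
    Real.exp (-u) ≤ 1 - u + u ^ 2 / 2 := by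
  have hsum := exp_taylor5 hu
  have hmul : 1 ≤ (1 - u + u ^ 2 / 2) * Real.exp u := by
    nlinarith [pow_nonneg hu 3, pow_nonneg hu 4, pow_nonneg hu 5, pow_nonneg hu 6,
      Real.exp_pos u, sq_nonneg u]
  have hid : Real.exp (-u) * Real.exp u = 1 := by
    rw [← Real.exp_add]; simp
  nlinarith [mul_le_mul_of_nonneg_left hmul (Real.exp_pos (-u)).le, Real.exp_pos (-u)]

private lemma exp_neg_cubic_lower {u : ℝ} (hu : 0 ≤ u) :
    1 - u + u ^ 2 / 2 - u ^ 3 / 6 ≤ Real.exp (-u) := by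
  set f : ℝ → ℝ := fun x => Real.exp (-x) - (1 - x + x ^ 2 / 2 - x ^ 3 / 6) with hf
  have hder : ∀ x : ℝ, HasDerivAt f (-Real.exp (-x) - (-1 + x - x ^ 2 / 2)) x := by
    intro x
    have h1 : HasDerivAt (fun x : ℝ => Real.exp (-x)) (-Real.exp (-x)) x := by
      exact ((Real.hasDerivAt_exp (-x)).comp x (hasDerivAt_neg x)).congr_deriv (by simp)
    have h2 : HasDerivAt (fun x : ℝ => 1 - x + x ^ 2 / 2 - x ^ 3 / 6)
        (-1 + x - x ^ 2 / 2) x := by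
      have ha : HasDerivAt (fun x : ℝ => x ^ 2 / 2) (2 * x ^ 1 / 2) x :=
        (hasDerivAt_pow 2 x).div_const 2
      have hb : HasDerivAt (fun x : ℝ => x ^ 3 / 6) (3 * x ^ 2 / 6) x :=
        (hasDerivAt_pow 3 x).div_const 6
      have hc : HasDerivAt (fun x : ℝ => 1 - x) (-1) x := by
        simpa using (hasDerivAt_id x).const_sub 1
      have := (hc.add ha).sub hb
      exact this.congr_deriv (by ring)
    exact h1.sub h2
  have hmono : MonotoneOn f (Set.Ici (0 : ℝ)) := by
    apply monotoneOn_of_deriv_nonneg (convex_Ici 0)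
    · exact fun x _ => (hder x).differentiableAt.continuousAt.continuousWithinAt
    · exact fun x _ => (hder x).differentiableAt.differentiableWithinAt
    · intro x hx
      rw [interior_Ici] at hx
      rw [(hder x).deriv]
      have := exp_neg_quad_upper (le_of_lt hx)
      linarith
  have h0 : f 0 ≤ f u := hmono (Set.mem_Ici.2 le_rfl) (Set.mem_Ici.2 hu) hu
  simp only [hf] at h0
  norm_num at h0
  linarith

private lemma Qpos {c s : ℝ} (hc : 1 ≤ c) (hb : 2 * c - 1 ≤ s)
    (he : 2 * (2 * c + 1) ≤ 3 * (c * s)) :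
    0 < (24 * c ^ 3 + 12 * c ^ 2 + 4 * c + 1) * s ^ 3
        + 6 * c * (s + 1) * (2 * c + 1) ^ 2 * s
        - 12 * c ^ 2 * (s + 1) * (2 * c + 1) * s ^ 2
        - 2 * (s + 1) * (2 * c + 1) ^ 3 := by
  have ha : (0:ℝ) ≤ c - 1 := by linarith
  have hbb : (0:ℝ) ≤ s - (2 * c - 1) := by linarith
  have hee : (0:ℝ) ≤ 3 * (c * s) - 2 * (2 * c + 1) := by linarith
  nlinarith [hee, mul_nonneg ha hee, ha, hbb, mul_nonneg ha hbb,
    mul_nonneg (mul_nonneg ha ha) hbb, mul_nonneg (mul_nonneg hbb hbb) hbb,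
    mul_nonneg ha (mul_nonneg hbb hbb), mul_nonneg (mul_nonneg ha ha) ha,
    mul_nonneg (mul_nonneg (mul_nonneg ha ha) ha) hbb,
    mul_nonneg (mul_nonneg ha ha) (mul_nonneg hbb hbb),
    mul_nonneg ha (mul_nonneg hbb (mul_nonneg hbb hbb)),
    mul_nonneg (mul_nonneg ha ha) (mul_nonneg ha ha),
    mul_nonneg hbb hbb]

/-- For all reals `d_r ≥ 2` and `c ≥ 1`:
`(d_r+2) e^{-1/c} - d_r e^{-(d_r+2)/(c d_r - 1)} < 2`. -/
theorem case3_term_smaller_two (dr c : ℝ) (hdr : 2 ≤ dr) (hc : 1 ≤ c) :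
    (dr + 2) * Real.exp (-(1 / c)) - dr * Real.exp (-((dr + 2) / (c * dr - 1))) < 2 := by
  have hc0 : (0:ℝ) < c := lt_of_lt_of_le one_pos hc
  have hdr0 : (0:ℝ) < dr := lt_of_lt_of_le two_pos hdr
  set s : ℝ := c * dr - 1 with hs_def
  have hsc : 2 * c - 1 ≤ s := by rw [hs_def]; nlinarith
  have hs0 : (0:ℝ) < s := by nlinarith
  have hdreq : dr = (s + 1) / c := by rw [hs_def]; field_simp; ring
  set u : ℝ := (2 * c + 1) / (c * s) with hu_def
  have hu0 : (0:ℝ) < u := by rw [hu_def]; positivity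
  -- the key reduced inequality
  have key : dr * (1 - Real.exp (-u)) < 2 * (Real.exp (1 / c) - 1) := by
    have hexpt := exp_taylor5 (t := 1 / c) (by positivity)
    by_cases hcase : 2 * (2 * c + 1) ≤ 3 * (c * s)
    · -- u ≤ 3/2 : use the cubic bound
      have hcubic : 1 - Real.exp (-u) ≤ u - u ^ 2 / 2 + u ^ 3 / 6 := by
        have := exp_neg_cubic_lower hu0.le
        linarith
      have hQ := Qpos hc hsc hcase
      have expand : (2 * (1 / c) + (1 / c) ^ 2 + (1 / c) ^ 3 / 3 + (1 / c) ^ 4 / 12)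
          - dr * (u - u ^ 2 / 2 + u ^ 3 / 6)
          = ((24 * c ^ 3 + 12 * c ^ 2 + 4 * c + 1) * s ^ 3
              + 6 * c * (s + 1) * (2 * c + 1) ^ 2 * s
              - 12 * c ^ 2 * (s + 1) * (2 * c + 1) * s ^ 2
              - 2 * (s + 1) * (2 * c + 1) ^ 3) / (12 * c ^ 4 * s ^ 3) := by
        rw [hu_def, hdreq]
        field_simp
        ring
      have hpos : (0:ℝ) < ((24 * c ^ 3 + 12 * c ^ 2 + 4 * c + 1) * s ^ 3
              + 6 * c * (s + 1) * (2 * c + 1) ^ 2 * s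
              - 12 * c ^ 2 * (s + 1) * (2 * c + 1) * s ^ 2
              - 2 * (s + 1) * (2 * c + 1) ^ 3) / (12 * c ^ 4 * s ^ 3) :=
        div_pos hQ (by positivity)
      have hpoly : dr * (u - u ^ 2 / 2 + u ^ 3 / 6)
          < 2 * (1 / c) + (1 / c) ^ 2 + (1 / c) ^ 3 / 3 + (1 / c) ^ 4 / 12 := by
        linarith [expand ▸ hpos]
      have hmono2 : dr * (1 - Real.exp (-u)) ≤ dr * (u - u ^ 2 / 2 + u ^ 3 / 6) :=
        mul_le_mul_of_nonneg_left hcubic hdr0.le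
      linarith
    · -- u ≥ 3/2 : crude bound, dr itself is small
      push_neg at hcase
      have key3 : 3 * c ^ 3 * dr ≤ 6 * c ^ 2 + 3 * c + 1 := by
        rw [hs_def] at hsc hcase
        have hp : (0:ℝ) ≤ 2 * (2 * c + 1) - 3 * (c * (c * dr - 1)) := by linarith
        nlinarith [mul_pos hc0 hc0, mul_nonneg (sub_nonneg.2 hdr) (mul_pos hc0 hc0).le,
          mul_nonneg (sub_nonneg.2 hc) (sub_nonneg.2 hdr), sq_nonneg (c - 1),
          mul_nonneg (sub_nonneg.2 hc) hp]
      have hdr_small : dr ≤ 2 * (1 / c) + (1 / c) ^ 2 + (1 / c) ^ 3 / 3 := by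
        have hrw : 2 * (1 / c) + (1 / c) ^ 2 + (1 / c) ^ 3 / 3
            = (6 * c ^ 2 + 3 * c + 1) / (3 * c ^ 3) := by
          field_simp
          ring
        rw [hrw, le_div_iff₀ (by positivity)]
        linarith
      have hB := Real.exp_pos (-u)
      nlinarith [mul_pos hdr0 hB]
  -- conclude
  have hA := Real.exp_pos (-(1 / c))
  have hAE : Real.exp (-(1 / c)) * Real.exp (1 / c) = 1 := by
    rw [← Real.exp_add]; simp
  have hxy : Real.exp (-((dr + 2) / (c * dr - 1)))
      = Real.exp (-(1 / c)) * Real.exp (-u) := by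
    rw [← Real.exp_add]
    congr 1
    rw [hu_def, hs_def]
    have hne2 : dr * c - 1 ≠ 0 := by rw [mul_comm]; exact hs0.ne'
    field_simp
    ring
  rw [hxy]
  nlinarith [mul_lt_mul_of_pos_left key hA, Real.exp_pos (-u)]
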